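/- The fracture square (Theorem 2.5(6) of the paper, stated objectwise): assume in addition that C has binary biproducts. Let X be an object of C with a torsion decomposition ΓX → X → LX → ΓX⟦1⟧ and a completion decomposition ΔX → X → ΛX → ΔX⟦1⟧, and let Γ' → ΛX → L' → Γ'⟦1⟧ be a torsion decomposition of ΛX (so L' plays the role of LΛX). Then: (a) there is a unique morphism φ : LX → L' such that φ composed with X → LX equals the composite X → ΛX → L'; (b) there exists a morphism δ : L' → X⟦1⟧ such that the triangle X → ΛX ⊕ LX → L' → X⟦1⟧ is distinguished, where the first morphism has components X → ΛX and X → LX, and the second morphism is the difference of the canonical morphism ΛX → L' and φ. In other words, the commutative square with vertices X, ΛX, LX, L' is homotopy cartesian. -/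

import Mathlib

open CategoryTheory CategoryTheory.Limits CategoryTheory.Pretriangulated

universe v u

variable {C : Type u} [Category.{v} C] [HasZeroObject C] [HasShift C ℤ]
  [Preadditive C] [∀ n : ℤ, (shiftFunctor C n).Additive] [Pretriangulated C]

/-- The orthogonal `T^⊥` of a class of objects `T`: all objects `Y` such that every
morphism `X⟦n⟧ ⟶ Y` with `X ∈ T` is zero. -/
def orth (T : Set C) : Set C :=
  {Y | ∀ X ∈ T, ∀ n : ℤ, ∀ f : X⟦n⟧ ⟶ Y, f = 0}

/-- A triangulated subcategory of `C`, given as a class of objects containing the zero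
objects, closed under isomorphism, shifts, and extensions. -/
structure TriangulatedSub (C : Type u) [Category.{v} C] [HasZeroObject C] [HasShift C ℤ]
    [Preadditive C] [∀ n : ℤ, (shiftFunctor C n).Additive] [Pretriangulated C] where
  P : Set C
  zero_mem : ∀ X : C, IsZero X → X ∈ P
  iso_closed : ∀ ⦃X Y : C⦄, (X ≅ Y) → X ∈ P → Y ∈ P
  shift_closed : ∀ (X : C) (n : ℤ), X ∈ P → X⟦n⟧ ∈ P
  ext_closed : ∀ (Tr : Triangle C), (Tr ∈ distTriang C) → Tr.obj₁ ∈ P → Tr.obj₃ ∈ P → Tr.obj₂ ∈ P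

/-- Any morphism from a member of `S` to a member of `orth S` vanishes. -/
lemma hom_zero_of_orth {S : Set C} {Y : C} (hY : Y ∈ orth S) {W : C} (hW : W ∈ S)
    (f : W ⟶ Y) : f = 0 := by
  have h := hY W hW 0 ((shiftFunctorZero C ℤ).hom.app W ≫ f)
  calc f = (shiftFunctorZero C ℤ).inv.app W ≫ ((shiftFunctorZero C ℤ).hom.app W ≫ f) := by
        rw [← Category.assoc, Iso.inv_hom_id_app, Category.id_comp]
    _ = 0 := by rw [h, Limits.comp_zero]

/-- If `S` is closed under shifts then `orth S` is closed under shifts. -/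
lemma shift_mem_orth (T : TriangulatedSub C) {Y : C} (hY : Y ∈ orth T.P) (m : ℤ) :
    Y⟦m⟧ ∈ orth T.P := by
  intro W hW n f
  have h : (shiftFunctor C (-m)).map f ≫ (shiftFunctorCompIsoId C m (-m) (by omega)).hom.app Y
      = 0 := hY ((W⟦n⟧)) (T.shift_closed W n hW) (-m) _
  have h2 : (shiftFunctor C (-m)).map f = 0 := by
    have := h =≫ (shiftFunctorCompIsoId C m (-m) (by omega)).inv.app Y
    simpa using this
  apply (shiftFunctor C (-m)).map_injective
  simpa using h2

/-- The fracture square (objectwise): there is a unique `φ : LX ⟶ L'` compatible with the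
decompositions, and the square with vertices `X`, `ΛX`, `LX`, `L'` is homotopy cartesian:
the triangle `X ⟶ ΛX ⊞ LX ⟶ L' ⟶ X⟦1⟧` is distinguished. -/
theorem fracture_square [HasBinaryBiproducts C] (T : TriangulatedSub C) (X : C)
    (ΓX LX : C) (a : ΓX ⟶ X) (b : X ⟶ LX) (c : LX ⟶ ΓX⟦(1 : ℤ)⟧)
    (hXdt : Triangle.mk a b c ∈ distTriang C) (hΓ : ΓX ∈ T.P) (hL : LX ∈ orth T.P)
    (ΔX ΛX : C) (d : ΔX ⟶ X) (e : X ⟶ ΛX) (f : ΛX ⟶ ΔX⟦(1 : ℤ)⟧)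
    (hXdt' : Triangle.mk d e f ∈ distTriang C) (hΔ : ΔX ∈ orth T.P)
    (hΛ : ΛX ∈ orth (orth T.P))
    (Γ' L' : C) (g : Γ' ⟶ ΛX) (l : ΛX ⟶ L') (k : L' ⟶ Γ'⟦(1 : ℤ)⟧)
    (hΛdt : Triangle.mk g l k ∈ distTriang C) (hΓ' : Γ' ∈ T.P) (hL' : L' ∈ orth T.P) :
    (∃! φ : LX ⟶ L', b ≫ φ = e ≫ l) ∧
    (∀ φ : LX ⟶ L', b ≫ φ = e ≫ l →
      ∃ δ : L' ⟶ X⟦(1 : ℤ)⟧,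
        Triangle.mk (biprod.lift e b) (biprod.desc l (-φ)) δ ∈ distTriang C) := by
  have hΔ1 : ΔX⟦(1 : ℤ)⟧ ∈ orth T.P := shift_mem_orth T hΔ 1
  -- Part (a)
  obtain ⟨φ₀, hφ₀⟩ : ∃ φ₀ : LX ⟶ L', e ≫ l = b ≫ φ₀ := Triangle.yoneda_exact₂ _ hXdt (e ≫ l)
    (hom_zero_of_orth hL' hΓ _)
  -- hφ₀ : e ≫ l = b ≫ φ₀
  have uniq : ∀ φ : LX ⟶ L', b ≫ φ = e ≫ l → φ = φ₀ := by
    intro φ hφ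
    have hsub : b ≫ (φ - φ₀) = 0 := by
      rw [Preadditive.comp_sub, hφ, hφ₀, sub_self]
    obtain ⟨ζ, hζ⟩ : ∃ ζ : ΓX⟦(1:ℤ)⟧ ⟶ L', φ - φ₀ = c ≫ ζ :=
      Triangle.yoneda_exact₃ _ hXdt (φ - φ₀) hsub
    have hζ0 : ζ = 0 := hL' ΓX hΓ 1 ζ
    rw [hζ0, Limits.comp_zero] at hζ
    exact sub_eq_zero.mp hζ
  refine ⟨⟨φ₀, hφ₀.symm, uniq⟩, ?_⟩
  -- Part (b)
  intro φ hφ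
  obtain ⟨Z, v, w, hTu⟩ := distinguished_cocone_triangle (biprod.lift e b)
  have huv : biprod.lift e b ≫ v = 0 := comp_distTriang_mor_zero₁₂ _ hTu
  have hvw : v ≫ w = 0 := comp_distTriang_mor_zero₂₃ _ hTu
  have hwu : w ≫ (biprod.lift e b)⟦(1 : ℤ)⟧' = 0 := comp_distTriang_mor_zero₃₁ _ hTu
  -- Z is in the orthogonal of T
  have hZ : Z ∈ orth T.P := by
    intro W hW n ψ
    have hV : W⟦n⟧ ∈ T.P := T.shift_closed W n hW
    -- first: ψ ≫ w = 0
    have h1 : (ψ ≫ w) ≫ e⟦(1 : ℤ)⟧' = 0 := by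
      have he : e⟦(1 : ℤ)⟧' = (biprod.lift e b)⟦(1 : ℤ)⟧' ≫ biprod.fst⟦(1 : ℤ)⟧' := by
        rw [← Functor.map_comp, biprod.lift_fst]
      rw [he, Category.assoc, ← Category.assoc w, hwu, Limits.zero_comp, Limits.comp_zero]
    obtain ⟨ρ, hρ⟩ : ∃ ρ : W⟦n⟧ ⟶ ΔX⟦(1:ℤ)⟧, ψ ≫ w = ρ ≫ (-d⟦(1:ℤ)⟧') := Triangle.coyoneda_exact₃ _
      (rot_of_distTriang _ (rot_of_distTriang _ hXdt')) (ψ ≫ w)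
      (by change (ψ ≫ w) ≫ (-e⟦(1:ℤ)⟧') = 0; rw [Preadditive.comp_neg, h1, neg_zero])
    have hρ0 : ρ = 0 := hom_zero_of_orth hΔ1 hV ρ
    have hψw : ψ ≫ w = 0 := by
      rw [hρ, hρ0, Limits.zero_comp]
    obtain ⟨α, hα⟩ : ∃ α : W⟦n⟧ ⟶ ΛX ⊞ LX, ψ = α ≫ v := Triangle.coyoneda_exact₃ _ hTu ψ hψw
    have hαsnd : α ≫ biprod.snd = 0 := hom_zero_of_orth hL hV _
    obtain ⟨β, hβ⟩ : ∃ β : W⟦n⟧ ⟶ X, α ≫ biprod.fst = β ≫ e :=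
      Triangle.coyoneda_exact₃ _ hXdt' (α ≫ biprod.fst)
      (hom_zero_of_orth hΔ1 hV _)
    have hβb : β ≫ b = 0 := hom_zero_of_orth hL hV _
    have hαeq : α = β ≫ biprod.lift e b - (β ≫ b) ≫ biprod.inr := by
      apply biprod.hom_ext
      · simpa [hβb] using hβ
      · simpa [hβb] using hαsnd
    rw [hα, hαeq, Preadditive.sub_comp, Category.assoc, huv, Limits.comp_zero,
      hβb, Limits.zero_comp, Limits.zero_comp, sub_zero]
  -- the comparison maps
  obtain ⟨θ, hθ⟩ : ∃ θ : Z ⟶ L', biprod.desc l (-φ) = v ≫ θ :=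
    Triangle.yoneda_exact₂ _ hTu (biprod.desc l (-φ))
    (by change biprod.lift e b ≫ biprod.desc l (-φ) = 0
        rw [biprod.lift_desc, Preadditive.comp_neg, hφ, add_neg_cancel])
  -- hθ : biprod.desc l (-φ) = v ≫ θ
  obtain ⟨θ', hθ'⟩ : ∃ θ' : L' ⟶ Z, biprod.inl ≫ v = l ≫ θ' :=
    Triangle.yoneda_exact₂ _ hΛdt (biprod.inl ≫ v)
    (hom_zero_of_orth hZ hΓ' _)
  -- hθ' : biprod.inl ≫ v = l ≫ θ'
  have h1 : θ' ≫ θ = 𝟙 L' := by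
    have hl : l ≫ (θ' ≫ θ - 𝟙 L') = 0 := by
      rw [Preadditive.comp_sub, ← Category.assoc, ← hθ', Category.assoc, ← hθ]
      simp
    obtain ⟨ζ, hζ⟩ : ∃ ζ : Γ'⟦(1:ℤ)⟧ ⟶ L', θ' ≫ θ - 𝟙 L' = k ≫ ζ :=
      Triangle.yoneda_exact₃ _ hΛdt _ hl
    have hζ0 : ζ = 0 := hL' Γ' hΓ' 1 ζ
    rw [hζ0, Limits.comp_zero] at hζ
    exact sub_eq_zero.mp hζ
  have hlift : e ≫ biprod.inl + b ≫ biprod.inr = (biprod.lift e b : X ⟶ ΛX ⊞ LX) := by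
    apply biprod.hom_ext <;> simp
  have hdesc : biprod.desc l (-φ) ≫ θ' = v := by
    have ht : b ≫ (biprod.inr ≫ v + φ ≫ θ') = 0 := by
      have : b ≫ φ ≫ θ' = e ≫ biprod.inl ≫ v := by
        rw [← Category.assoc, hφ, Category.assoc, ← hθ', ← Category.assoc, Category.assoc]
      rw [Preadditive.comp_add, this, ← Category.assoc, ← Category.assoc,
        ← Preadditive.add_comp]
      rw [show b ≫ biprod.inr + e ≫ biprod.inl = (biprod.lift e b : X ⟶ ΛX ⊞ LX) by
        rw [add_comm]; exact hlift, huv]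
    obtain ⟨η, hη⟩ : ∃ η : ΓX⟦(1:ℤ)⟧ ⟶ Z, biprod.inr ≫ v + φ ≫ θ' = c ≫ η :=
      Triangle.yoneda_exact₃ _ hXdt _ ht
    have hη0 : η = 0 := hZ ΓX hΓ 1 η
    rw [hη0, Limits.comp_zero] at hη
    apply biprod.hom_ext'
    · rw [← Category.assoc, biprod.inl_desc, ← hθ']
    · rw [← Category.assoc, biprod.inr_desc, Preadditive.neg_comp]
      exact neg_eq_of_add_eq_zero_left hη
  have h2 : θ ≫ θ' = 𝟙 Z := by
    have hv : v ≫ (θ ≫ θ' - 𝟙 Z) = 0 := by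
      rw [Preadditive.comp_sub, ← Category.assoc, ← hθ, hdesc, Category.comp_id, sub_self]
    obtain ⟨ζ', hζ'⟩ : ∃ ζ' : X⟦(1:ℤ)⟧ ⟶ Z, θ ≫ θ' - 𝟙 Z = w ≫ ζ' :=
      Triangle.yoneda_exact₃ _ hTu _ hv
    -- ζ' : X⟦1⟧ ⟶ Z ; show w ≫ ζ' = 0
    have haζ : a⟦(1 : ℤ)⟧' ≫ ζ' = 0 := hZ ΓX hΓ 1 _
    obtain ⟨ξ, hξ⟩ : ∃ ξ : LX⟦(1:ℤ)⟧ ⟶ Z, ζ' = (-b⟦(1:ℤ)⟧') ≫ ξ := Triangle.yoneda_exact₃ _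
      (rot_of_distTriang _ (rot_of_distTriang _ hXdt)) ζ'
      (by change (-a⟦(1:ℤ)⟧') ≫ ζ' = 0; rw [Preadditive.neg_comp, haζ, neg_zero])
    have hwb : w ≫ b⟦(1 : ℤ)⟧' = 0 := by
      have hb : b⟦(1 : ℤ)⟧' = (biprod.lift e b)⟦(1 : ℤ)⟧' ≫ biprod.snd⟦(1 : ℤ)⟧' := by
        rw [← Functor.map_comp, biprod.lift_snd]
      rw [hb, ← Category.assoc, hwu, Limits.zero_comp]
    have hwζ : w ≫ ζ' = 0 := by
      rw [hξ]
      rw [Preadditive.neg_comp, Preadditive.comp_neg, ← Category.assoc, hwb,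
        Limits.zero_comp, neg_zero]
    exact sub_eq_zero.mp (hζ'.trans hwζ)
  -- conclude
  refine ⟨θ' ≫ w, ?_⟩
  refine isomorphic_distinguished _ hTu _ ?_
  refine Triangle.isoMk _ _ (Iso.refl X) (Iso.refl _) (Iso.mk θ' θ h1 h2) ?_ ?_ ?_
  · change biprod.lift e b ≫ 𝟙 _ = 𝟙 X ≫ biprod.lift e b; rw [Category.comp_id, Category.id_comp]
  · change biprod.desc l (-φ) ≫ θ' = 𝟙 _ ≫ v; rw [Category.id_comp, hdesc]
  · change (θ' ≫ w) ≫ (𝟙 X)⟦(1:ℤ)⟧' = θ' ≫ w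
    rw [CategoryTheory.Functor.map_id, Category.comp_id]
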